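/- If G has torsion subgroup T and both T and G/T are strongly Hopfian, then G is strongly Hopfian. -/

import Mathlib

/-- An abelian group is strongly Hopfian if for every endomorphism `φ`,
the ascending chain `ker φ ≤ ker φ² ≤ …` is eventually stationary. -/
def StronglyHopfian (G : Type*) [AddCommGroup G] : Prop :=
  ∀ φ : AddMonoid.End G, ∃ n : ℕ, ∀ m : ℕ, n ≤ m →
    AddMonoidHom.ker (φ ^ m : G →+ G) = AddMonoidHom.ker (φ ^ n : G →+ G)

theorem stmt9 {G : Type*} [AddCommGroup G]
    (hT : StronglyHopfian (AddCommGroup.torsion G))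
    (hQ : StronglyHopfian (G ⧸ AddCommGroup.torsion G)) :
    StronglyHopfian G := by
  intro φ
  set T := AddCommGroup.torsion G with hTdef
  have hmap : ∀ x ∈ T, φ x ∈ T := fun x hx => φ.isOfFinAddOrder hx
  set ψ : AddMonoid.End T :=
    AddMonoidHom.codRestrict ((φ : G →+ G).domRestrict T) T
      (fun x => hmap x x.2) with hψ
  have hle : T ≤ T.comap (φ : G →+ G) := fun x hx => hmap x hx
  set φbar : AddMonoid.End (G ⧸ T) :=
    QuotientAddGroup.map T T (φ : G →+ G) hle with hφbar
  -- coercion compatibility for powers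
  have hψpow : ∀ (k : ℕ) (x : T), ((ψ ^ k) x : G) = (φ ^ k) x := by
    intro k
    induction k with
    | zero => intro x; simp
    | succ k ih =>
      intro x
      have : (ψ ^ (k+1)) x = (ψ ^ k) (ψ x) := by
        rw [pow_succ]; rfl
      rw [this, ih (ψ x)]
      have : ((ψ x : G)) = φ (x : G) := rfl
      rw [this]
      have : (φ ^ (k+1)) (x : G) = (φ ^ k) (φ (x : G)) := by
        rw [pow_succ]; rfl
      rw [this]
  have hbarpow : ∀ (k : ℕ) (x : G),
      (φbar ^ k) (QuotientAddGroup.mk x) = QuotientAddGroup.mk ((φ ^ k) x) := by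
    intro k
    induction k with
    | zero => intro x; simp
    | succ k ih =>
      intro x
      have h1 : (φbar ^ (k+1)) (QuotientAddGroup.mk x)
          = (φbar ^ k) (φbar (QuotientAddGroup.mk x)) := by
        rw [pow_succ]; rfl
      have h2 : φbar (QuotientAddGroup.mk x) = QuotientAddGroup.mk (φ x) := rfl
      rw [h1, h2, ih (φ x)]
      have : (φ ^ (k+1)) x = (φ ^ k) (φ x) := by rw [pow_succ]; rfl
      rw [this]
  obtain ⟨nT, hnT⟩ := hT ψ
  obtain ⟨nQ, hnQ⟩ := hQ φbar
  refine ⟨nT + nQ, fun m hm => ?_⟩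
  apply le_antisymm
  · -- ker φ^m ≤ ker φ^(nT+nQ)
    intro x hx
    have hx' : (φ ^ m) x = 0 := hx
    -- quotient part
    have hq : (φbar ^ m) (QuotientAddGroup.mk x) = 0 := by
      rw [hbarpow, hx']; simp
    have hq' : (φbar ^ nQ) (QuotientAddGroup.mk x) = 0 := by
      have := hnQ m (le_trans (Nat.le_add_left _ _) hm)
      have hmem : QuotientAddGroup.mk x ∈ AddMonoidHom.ker (φbar ^ m : _ →+ _) := hq
      rw [this] at hmem; exact hmem
    rw [hbarpow] at hq'
    have htm : (φ ^ nQ) x ∈ T := by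
      rwa [QuotientAddGroup.eq_zero_iff] at hq'
    set t : T := ⟨(φ ^ nQ) x, htm⟩ with ht
    have htk : (ψ ^ (m - nQ)) t = 0 := by
      apply Subtype.ext
      rw [hψpow]
      show (φ ^ (m - nQ)) ((φ ^ nQ) x) = (0 : G)
      have : (φ ^ (m - nQ)) ((φ ^ nQ) x) = (φ ^ (m - nQ + nQ)) x := by
        rw [pow_add]; rfl
      rw [this, Nat.sub_add_cancel (le_trans (Nat.le_add_left _ _) hm), hx']
    have htn : (ψ ^ nT) t = 0 := by
      have hge : nT ≤ m - nQ := by omega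
      have := hnT (m - nQ) hge
      have hmem : t ∈ AddMonoidHom.ker (ψ ^ (m - nQ) : _ →+ _) := htk
      rw [this] at hmem; exact hmem
    show (φ ^ (nT + nQ)) x = 0
    have h1 : (φ ^ (nT + nQ)) x = (φ ^ nT) ((φ ^ nQ) x) := by
      rw [pow_add]; rfl
    have h2 : ((ψ ^ nT) t : G) = (φ ^ nT) ((φ ^ nQ) x) := hψpow nT t
    rw [h1, ← h2, htn]; rfl
  · -- ker φ^(nT+nQ) ≤ ker φ^m
    intro x hx
    have hx' : (φ ^ (nT + nQ)) x = 0 := hx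
    show (φ ^ m) x = 0
    have : (φ ^ m) x = (φ ^ (m - (nT + nQ))) ((φ ^ (nT + nQ)) x) := by
      conv_lhs => rw [show m = (m - (nT + nQ)) + (nT + nQ) from (Nat.sub_add_cancel hm).symm,
        pow_add]
      rfl
    rw [this, hx', map_zero]
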